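/- |b − √(c h / 2)| ≤ (c³/(8√2))(M'' + 6 (M')²), where b = √a. -/

import Mathlib

open intervalIntegral Real

set_option maxHeartbeats 800000 in
theorem stmt_10
    (c : ℝ) (hc : 0 < c)
    (V V' V'' : ℝ → ℝ)
    (hV1 : ∀ x ∈ Set.Icc (-c) c, HasDerivAt V (V' x) x)
    (hV2 : ∀ x ∈ Set.Icc (-c) c, HasDerivAt V' (V'' x) x)
    (hV2c : ContinuousOn V'' (Set.Icc (-c) c))
    (hVnn : ∀ x ∈ Set.Icc (-c) c, 0 ≤ V x)
    (r v : ℝ → ℝ)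
    (hr : ∀ x, r x = Real.sqrt (c ^ 2 - x ^ 2))
    (hv : ∀ x, v x = r x * (1 + V x))
    (z₀ : ℝ) (hz₀ : z₀ ∈ Set.Ioo (-c) c)
    (hmax : ∀ x ∈ Set.Icc (-c) c, v x ≤ v z₀)
    (M M' M'' : ℝ)
    (hM : IsLUB (V '' Set.Icc (-c) c) M)
    (hM' : IsLUB ((fun x => |V' x|) '' Set.Icc (-c) c) M')
    (hM'' : IsLUB ((fun x => |V'' x|) '' Set.Icc (-c) c) M'')
    (a : ℝ) (ha : a = (1 / Real.pi) * ∫ x in (-c)..c, v x)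
    :
    |Real.sqrt a - Real.sqrt (c * v z₀ / 2)| ≤ c ^ 3 / (8 * Real.sqrt 2) * (M'' + 6 * M' ^ 2) := by
  have hπ : (0:ℝ) < Real.pi := Real.pi_pos
  have hcc : -c ≤ c := by linarith
  have hIcc : Set.uIcc (-c) c = Set.Icc (-c) c := Set.uIcc_of_le hcc
  have h0mem : (0:ℝ) ∈ Set.Icc (-c) c := ⟨by linarith, hc.le⟩
  have hz₀mem : z₀ ∈ Set.Icc (-c) c := Set.mem_Icc_of_Ioo hz₀
  -- bounds from LUBs
  have hV'le : ∀ x ∈ Set.Icc (-c) c, |V' x| ≤ M' := fun x hx => hM'.1 ⟨x, hx, rfl⟩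
  have hV''le : ∀ x ∈ Set.Icc (-c) c, |V'' x| ≤ M'' := fun x hx => hM''.1 ⟨x, hx, rfl⟩
  have hM'0 : 0 ≤ M' := le_trans (abs_nonneg _) (hV'le 0 h0mem)
  have hM''0 : 0 ≤ M'' := le_trans (abs_nonneg _) (hV''le 0 h0mem)
  -- r basic facts
  have hr0 : r 0 = c := by rw [hr]; simp [Real.sqrt_sq hc.le]
  have hrnn : ∀ x, 0 ≤ r x := fun x => by rw [hr]; exact Real.sqrt_nonneg _
  have hrlec : ∀ x, r x ≤ c := by
    intro x
    rw [hr]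
    calc Real.sqrt (c^2 - x^2) ≤ Real.sqrt (c^2) :=
          Real.sqrt_le_sqrt (by nlinarith [sq_nonneg x])
      _ = c := Real.sqrt_sq hc.le
  have hrcont : Continuous r := by
    rw [show r = fun x => Real.sqrt (c^2 - x^2) from funext hr]
    exact Real.continuous_sqrt.comp (continuous_const.sub (continuous_pow 2))
  have hVcont : ContinuousOn V (Set.Icc (-c) c) :=
    fun x hx => ((hV1 x hx).continuousAt).continuousWithinAt
  have hV'cont : ContinuousOn V' (Set.Icc (-c) c) :=
    fun x hx => ((hV2 x hx).continuousAt).continuousWithinAt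
  -- uIcc 0 x ⊆ Icc (-c) c for x in Icc
  have hsub : ∀ x ∈ Set.Icc (-c) c, Set.uIcc 0 x ⊆ Set.Icc (-c) c := by
    intro x hx
    rw [← hIcc]
    exact Set.uIcc_subset_uIcc (hIcc ▸ h0mem) (hIcc ▸ hx)
  -- |V' x - V' 0| ≤ M'' * |x|
  have hV'bd : ∀ x ∈ Set.Icc (-c) c, |V' x - V' 0| ≤ M'' * |x| := by
    intro x hx
    have hftc : ∫ t in (0:ℝ)..x, V'' t = V' x - V' 0 :=
      intervalIntegral.integral_eq_sub_of_hasDerivAt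
        (fun t ht => hV2 t (hsub x hx ht))
        ((hV2c.mono (hsub x hx)).intervalIntegrable)
    rw [← hftc]
    have := intervalIntegral.norm_integral_le_of_norm_le_const
      (f := V'') (a := 0) (b := x) (C := M'')
      (fun t ht => hV''le t (hsub x hx (Set.uIoc_subset_uIcc ht)))
    simpa using this
  -- Taylor bound
  have hTay : ∀ x ∈ Set.Icc (-c) c, |V x - V 0 - V' 0 * x| ≤ M'' / 2 * x ^ 2 := by
    intro x hx
    have hftc : ∫ t in (0:ℝ)..x, (V' t - V' 0) = (V x - V' 0 * x) - (V 0 - V' 0 * 0) := by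
      apply intervalIntegral.integral_eq_sub_of_hasDerivAt
        (f := fun t => V t - V' 0 * t)
      · intro t ht
        exact (hV1 t (hsub x hx ht)).sub (by simpa using (hasDerivAt_id t).const_mul (V' 0))
      · exact ((hV'cont.mono (hsub x hx)).sub continuousOn_const).intervalIntegrable
    have heq : V x - V 0 - V' 0 * x = ∫ t in (0:ℝ)..x, (V' t - V' 0) := by
      rw [hftc]; ring
    rw [heq]
    have hbd : ∀ᵐ t ∂(MeasureTheory.volume).restrict (Set.uIoc 0 x),
        ‖V' t - V' 0‖ ≤ M'' * |t| := by
      apply MeasureTheory.ae_restrict_of_forall_mem measurableSet_uIoc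
      intro t ht
      exact hV'bd t (hsub x hx (Set.uIoc_subset_uIcc ht))
    have hgint : IntervalIntegrable (fun t => M'' * |t|) MeasureTheory.volume 0 x :=
      (continuous_const.mul continuous_abs).intervalIntegrable _ _
    have h1 := intervalIntegral.norm_integral_le_abs_of_norm_le hbd hgint
    have h2 : abs (∫ t in (0:ℝ)..x, M'' * |t|) = M'' / 2 * x ^ 2 := by
      rcases le_or_gt 0 x with hx0 | hx0
      · have : ∫ t in (0:ℝ)..x, M'' * |t| = ∫ t in (0:ℝ)..x, M'' * t := by
          apply intervalIntegral.integral_congr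
          intro t ht
          rw [Set.uIcc_of_le hx0] at ht
          simp only [abs_of_nonneg ht.1]
        rw [this, intervalIntegral.integral_const_mul, integral_id]
        rw [abs_of_nonneg (by nlinarith [mul_nonneg hM''0 (sq_nonneg x)] :
          (0:ℝ) ≤ M'' * ((x ^ 2 - 0 ^ 2) / 2))]
        ring
      · have : ∫ t in (0:ℝ)..x, M'' * |t| = ∫ t in (0:ℝ)..x, M'' * (-t) := by
          apply intervalIntegral.integral_congr
          intro t ht
          rw [Set.uIcc_of_ge hx0.le] at ht
          simp only [abs_of_nonpos ht.2]
        rw [this]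
        have : ∫ t in (0:ℝ)..x, M'' * (-t) = -(M'' * (x^2 - 0^2)/2) := by
          simp only [mul_neg]
          rw [intervalIntegral.integral_neg, intervalIntegral.integral_const_mul, integral_id]
          ring
        rw [this, abs_of_nonpos (by nlinarith [sq_nonneg x])]
        ring
    calc ‖∫ t in (0:ℝ)..x, (V' t - V' 0)‖ ≤ abs (∫ t in (0:ℝ)..x, M'' * |t|) := h1
      _ = M'' / 2 * x ^ 2 := h2
  -- |V z₀ - V 0| ≤ M' * |z₀|
  have hVz₀bd : |V z₀ - V 0| ≤ M' * |z₀| := by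
    have hftc : ∫ t in (0:ℝ)..z₀, V' t = V z₀ - V 0 :=
      intervalIntegral.integral_eq_sub_of_hasDerivAt
        (fun t ht => hV1 t (hsub z₀ hz₀mem ht))
        ((hV'cont.mono (hsub z₀ hz₀mem)).intervalIntegrable)
    rw [← hftc]
    have := intervalIntegral.norm_integral_le_of_norm_le_const
      (f := V') (a := 0) (b := z₀) (C := M')
      (fun t ht => hV'le t (hsub z₀ hz₀mem (Set.uIoc_subset_uIcc ht)))
    simpa [mul_comm] using this
  -- first-order condition at z₀
  have hrz₀pos : 0 < c ^ 2 - z₀ ^ 2 := by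
    obtain ⟨h1, h2⟩ := hz₀
    nlinarith
  have hrz₀ : 0 < r z₀ := by rw [hr]; exact Real.sqrt_pos.mpr hrz₀pos
  have hrz₀sq : r z₀ ^ 2 = c ^ 2 - z₀ ^ 2 := by
    rw [hr]; exact Real.sq_sqrt hrz₀pos.le
  have hderiv_r : HasDerivAt r (-z₀ / r z₀) z₀ := by
    have hf : HasDerivAt (fun x : ℝ => c ^ 2 - x ^ 2) (-(2 * z₀)) z₀ := by
      simpa using ((hasDerivAt_pow 2 z₀).const_sub (c ^ 2))
    have hsq : HasDerivAt Real.sqrt (1 / (2 * Real.sqrt (c ^ 2 - z₀ ^ 2))) (c ^ 2 - z₀ ^ 2) :=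
      Real.hasDerivAt_sqrt hrz₀pos.ne'
    have := hsq.comp z₀ hf
    have heq : (fun x => Real.sqrt (c ^ 2 - x ^ 2)) = r := (funext hr).symm
    rw [show (Real.sqrt ∘ fun x : ℝ => c ^ 2 - x ^ 2) = r by
      funext x; simp [Function.comp, hr]] at this
    have hs : Real.sqrt (c ^ 2 - z₀ ^ 2) ≠ 0 := ne_of_gt (Real.sqrt_pos.mpr hrz₀pos)
    refine this.congr_deriv ?_
    rw [hr]
    field_simp
  have hderiv_v : HasDerivAt v (-z₀ / r z₀ * (1 + V z₀) + r z₀ * V' z₀) z₀ := by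
    have h1V : HasDerivAt (fun x => 1 + V x) (V' z₀) z₀ := (hV1 z₀ hz₀mem).const_add 1
    have := hderiv_r.mul h1V
    rw [show (r * fun x => 1 + V x) = v from funext fun x => (hv x).symm] at this
    convert this using 1
  have hlocmax : IsLocalMax v z₀ := by
    filter_upwards [Ioo_mem_nhds hz₀.1 hz₀.2] with x hx
    exact hmax x (Set.mem_Icc_of_Ioo hx)
  have hcrit := hlocmax.hasDerivAt_eq_zero hderiv_v
  have hfoc : z₀ * (1 + V z₀) = r z₀ ^ 2 * V' z₀ := by
    have h3 : -z₀ * (1 + V z₀) + r z₀ ^ 2 * V' z₀ = 0 := by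
      have e : (-z₀ / r z₀ * (1 + V z₀) + r z₀ * V' z₀) * r z₀
          = -z₀ * (1 + V z₀) + r z₀ ^ 2 * V' z₀ := by
        field_simp
      rw [← e, hcrit, zero_mul]
    linarith
  have hVz₀nn : 0 ≤ V z₀ := hVnn z₀ hz₀mem
  have hz₀bd : |z₀| ≤ c ^ 2 * M' := by
    have h1 : |z₀| * (1 + V z₀) = r z₀ ^ 2 * |V' z₀| := by
      have := congrArg abs hfoc
      rwa [abs_mul, abs_mul, abs_of_nonneg (by linarith : (0:ℝ) ≤ 1 + V z₀),
        abs_of_nonneg (sq_nonneg (r z₀))] at this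
    have h2 : |z₀| ≤ |z₀| * (1 + V z₀) := by nlinarith [abs_nonneg z₀]
    have h3 : r z₀ ^ 2 * |V' z₀| ≤ c ^ 2 * M' := by
      have := hV'le z₀ hz₀mem
      nlinarith [abs_nonneg (V' z₀), hrz₀sq, sq_nonneg z₀]
    linarith
  -- integral computations
  have hIr : ∫ x in (-c)..c, Real.sqrt (c ^ 2 - x ^ 2) = Real.pi * c ^ 2 / 2 := by
    have h1 : (fun x : ℝ => Real.sqrt (c ^ 2 - (c * x) ^ 2))
        = fun x : ℝ => c * Real.sqrt (1 - x ^ 2) := by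
      funext x
      rw [show c ^ 2 - (c * x) ^ 2 = c ^ 2 * (1 - x ^ 2) by ring,
        Real.sqrt_mul (sq_nonneg c), Real.sqrt_sq hc.le]
    have h2 := intervalIntegral.integral_comp_mul_left (a := -1) (b := 1)
      (fun x => Real.sqrt (c ^ 2 - x ^ 2)) hc.ne'
    simp only [h1] at h2
    rw [intervalIntegral.integral_const_mul, integral_sqrt_one_sub_sq] at h2
    rw [show c * (-1 : ℝ) = -c by ring, show c * (1 : ℝ) = c by ring, smul_eq_mul] at h2
    field_simp at h2
    linarith
  have hIxr : ∫ x in (-c)..c, x * Real.sqrt (c ^ 2 - x ^ 2) = 0 := by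
    have hodd := intervalIntegral.integral_comp_neg (a := -c) (b := c)
      (fun x => x * Real.sqrt (c ^ 2 - x ^ 2))
    simp only [neg_neg, neg_sq] at hodd
    have h2 : ∫ x in (-c)..c, -x * Real.sqrt (c ^ 2 - x ^ 2)
        = -∫ x in (-c)..c, x * Real.sqrt (c ^ 2 - x ^ 2) := by
      rw [← intervalIntegral.integral_neg]
      congr 1
      funext x
      ring
    rw [h2] at hodd
    linarith
  have hIabs : ∫ x in (-c)..c, |x| = c ^ 2 := by
    have hi1 : IntervalIntegrable (fun x : ℝ => |x|) MeasureTheory.volume (-c) 0 :=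
      continuous_abs.intervalIntegrable _ _
    have hi2 : IntervalIntegrable (fun x : ℝ => |x|) MeasureTheory.volume 0 c :=
      continuous_abs.intervalIntegrable _ _
    rw [← intervalIntegral.integral_add_adjacent_intervals hi1 hi2]
    have e1 : ∫ x in (-c)..(0:ℝ), |x| = c ^ 2 / 2 := by
      have : ∫ x in (-c)..(0:ℝ), |x| = ∫ x in (-c)..(0:ℝ), -x := by
        apply intervalIntegral.integral_congr
        intro t ht
        rw [Set.uIcc_of_le (by linarith : -c ≤ (0:ℝ))] at ht
        exact abs_of_nonpos ht.2
      rw [this, intervalIntegral.integral_neg, integral_id]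
      ring
    have e2 : ∫ x in (0:ℝ)..c, |x| = c ^ 2 / 2 := by
      have : ∫ x in (0:ℝ)..c, |x| = ∫ x in (0:ℝ)..c, x := by
        apply intervalIntegral.integral_congr
        intro t ht
        rw [Set.uIcc_of_le hc.le] at ht
        exact abs_of_nonneg ht.1
      rw [this, integral_id]
      ring
    rw [e1, e2]; ring
  -- key1 : |a - c^2/2 * (1+V 0)| ≤ M''*c^4/(4π)
  have hrint : IntervalIntegrable r MeasureTheory.volume (-c) c :=
    hrcont.intervalIntegrable _ _
  have hxrint : IntervalIntegrable (fun x => x * r x) MeasureTheory.volume (-c) c :=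
    (continuous_id.mul hrcont).intervalIntegrable _ _
  have hQcont : ContinuousOn (fun x => r x * (V x - V 0 - V' 0 * x)) (Set.Icc (-c) c) :=
    hrcont.continuousOn.mul ((hVcont.sub continuousOn_const).sub
      (continuousOn_const.mul (continuousOn_id)))
  have hQint : IntervalIntegrable (fun x => r x * (V x - V 0 - V' 0 * x))
      MeasureTheory.volume (-c) c := by
    apply ContinuousOn.intervalIntegrable
    rwa [hIcc]
  have hPint : IntervalIntegrable (fun x => (1 + V 0) * r x + V' 0 * (x * r x))
      MeasureTheory.volume (-c) c :=
    (hrint.const_mul _).add (hxrint.const_mul _)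
  have hsplit : (∫ x in (-c)..c, v x)
      = Real.pi * c ^ 2 / 2 * (1 + V 0) + ∫ x in (-c)..c, r x * (V x - V 0 - V' 0 * x) := by
    have h1 : v = fun x => ((1 + V 0) * r x + V' 0 * (x * r x))
        + r x * (V x - V 0 - V' 0 * x) := by
      funext x
      rw [hv]; ring
    rw [h1, intervalIntegral.integral_add hPint hQint,
      intervalIntegral.integral_add (hrint.const_mul _) (hxrint.const_mul _),
      intervalIntegral.integral_const_mul, intervalIntegral.integral_const_mul]
    have hrI : ∫ x in (-c)..c, r x = Real.pi * c ^ 2 / 2 := by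
      rw [show r = fun x => Real.sqrt (c ^ 2 - x ^ 2) from funext hr]; exact hIr
    have hxrI : ∫ x in (-c)..c, x * r x = 0 := by
      rw [show (fun x => x * r x) = fun x => x * Real.sqrt (c ^ 2 - x ^ 2) by
        funext x; rw [hr]]
      exact hIxr
    rw [hrI, hxrI]
    ring
  have hQbd : |∫ x in (-c)..c, r x * (V x - V 0 - V' 0 * x)| ≤ M'' * c ^ 4 / 4 := by
    have hbd : ∀ᵐ t ∂(MeasureTheory.volume).restrict (Set.uIoc (-c) c),
        ‖r t * (V t - V 0 - V' 0 * t)‖ ≤ M'' / 2 * (c ^ 2 / 2) * |t| := by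
      apply MeasureTheory.ae_restrict_of_forall_mem measurableSet_uIoc
      intro t ht
      have htmem : t ∈ Set.Icc (-c) c := hIcc ▸ Set.uIoc_subset_uIcc ht
      have h1 : ‖r t * (V t - V 0 - V' 0 * t)‖ ≤ r t * (M'' / 2 * t ^ 2) := by
        rw [norm_mul, Real.norm_eq_abs, Real.norm_eq_abs, abs_of_nonneg (hrnn t)]
        exact mul_le_mul_of_nonneg_left (hTay t htmem) (hrnn t)
      have h2 : r t * t ^ 2 ≤ c ^ 2 / 2 * |t| := by
        have hnn : 0 ≤ c ^ 2 - t ^ 2 := by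
          obtain ⟨ht1, ht2⟩ := htmem
          nlinarith
        rw [hr]
        have e1 : Real.sqrt (c ^ 2 - t ^ 2) * t ^ 2
            = Real.sqrt ((c ^ 2 - t ^ 2) * (t ^ 2) ^ 2) := by
          rw [Real.sqrt_mul hnn, Real.sqrt_sq (sq_nonneg t)]
        rw [e1]
        calc Real.sqrt ((c ^ 2 - t ^ 2) * (t ^ 2) ^ 2)
            ≤ Real.sqrt ((c ^ 2 / 2 * |t|) ^ 2) := by
              apply Real.sqrt_le_sqrt
              rw [mul_pow, sq_abs]
              nlinarith [mul_nonneg (sq_nonneg t) (sq_nonneg (c ^ 2 / 2 - t ^ 2))]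
          _ = c ^ 2 / 2 * |t| := Real.sqrt_sq (by positivity)
      calc ‖r t * (V t - V 0 - V' 0 * t)‖ ≤ r t * (M'' / 2 * t ^ 2) := h1
        _ = M'' / 2 * (r t * t ^ 2) := by ring
        _ ≤ M'' / 2 * (c ^ 2 / 2 * |t|) := by
            apply mul_le_mul_of_nonneg_left h2 (by positivity)
        _ = M'' / 2 * (c ^ 2 / 2) * |t| := by ring
    have hgint : IntervalIntegrable (fun t : ℝ => M'' / 2 * (c ^ 2 / 2) * |t|)
        MeasureTheory.volume (-c) c :=
      (continuous_const.mul continuous_abs).intervalIntegrable _ _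
    have h1 := intervalIntegral.norm_integral_le_abs_of_norm_le hbd hgint
    have h2 : ∫ t in (-c)..c, M'' / 2 * (c ^ 2 / 2) * |t| = M'' * c ^ 4 / 4 := by
      rw [intervalIntegral.integral_const_mul, hIabs]
      ring
    rw [h2] at h1
    calc |∫ x in (-c)..c, r x * (V x - V 0 - V' 0 * x)|
        ≤ |M'' * c ^ 4 / 4| := h1
      _ = M'' * c ^ 4 / 4 := abs_of_nonneg (by positivity)
  have key1 : |a - c ^ 2 / 2 * (1 + V 0)| ≤ M'' * c ^ 4 / (4 * Real.pi) := by
    have : a - c ^ 2 / 2 * (1 + V 0)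
        = (1 / Real.pi) * ∫ x in (-c)..c, r x * (V x - V 0 - V' 0 * x) := by
      rw [ha, hsplit]
      field_simp
      ring
    rw [this, abs_mul, abs_of_nonneg (by positivity : (0:ℝ) ≤ 1 / Real.pi)]
    calc 1 / Real.pi * |∫ x in (-c)..c, r x * (V x - V 0 - V' 0 * x)|
        ≤ 1 / Real.pi * (M'' * c ^ 4 / 4) :=
          mul_le_mul_of_nonneg_left hQbd (by positivity)
      _ = M'' * c ^ 4 / (4 * Real.pi) := by
          rw [div_mul_div_comm, one_mul, mul_comm Real.pi 4]
  -- key2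
  have hv0 : v 0 = c * (1 + V 0) := by rw [hv, hr0]
  have hV0nn : 0 ≤ V 0 := hVnn 0 h0mem
  have hvz₀ : c ≤ v z₀ := by
    have := hmax 0 h0mem
    rw [hv0] at this
    nlinarith
  have key2 : |c * v z₀ / 2 - c ^ 2 / 2 * (1 + V 0)| ≤ c ^ 4 * M' ^ 2 / 2 := by
    have hlow : c * (1 + V 0) ≤ v z₀ := by
      have := hmax 0 h0mem
      rwa [hv0] at this
    have hupp : v z₀ ≤ c * (1 + V 0) + c ^ 3 * M' ^ 2 := by
      have h1 : v z₀ = r z₀ * (1 + V z₀) := hv z₀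
      have h2 : r z₀ * (1 + V z₀) ≤ c * (1 + V z₀) :=
        mul_le_mul_of_nonneg_right (hrlec z₀) (by linarith)
      have h3 : V z₀ ≤ V 0 + M' * |z₀| := by
        have := abs_le.mp hVz₀bd
        linarith [this.2]
      have h4 : M' * |z₀| ≤ M' * (c ^ 2 * M') := mul_le_mul_of_nonneg_left hz₀bd hM'0
      nlinarith
    rw [abs_le]
    constructor <;> nlinarith
  -- key3
  have key3 : |a - c * v z₀ / 2| ≤ M'' * c ^ 4 / (4 * Real.pi) + c ^ 4 * M' ^ 2 / 2 := by
    have := abs_sub_le a (c ^ 2 / 2 * (1 + V 0)) (c * v z₀ / 2)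
    rw [abs_sub_comm (c ^ 2 / 2 * (1 + V 0)) (c * v z₀ / 2)] at this
    linarith [key1, key2]
  -- lower bounds for a and K
  have halow : c ^ 2 / 2 ≤ a := by
    have hmono : ∫ x in (-c)..c, r x ≤ ∫ x in (-c)..c, v x := by
      apply intervalIntegral.integral_mono_on hcc hrint
      · apply ContinuousOn.intervalIntegrable
        rw [hIcc]
        rw [show v = fun x => r x * (1 + V x) from funext hv]
        exact hrcont.continuousOn.mul (continuousOn_const.add hVcont)
      · intro x hx
        rw [hv]
        nlinarith [hrnn x, hVnn x hx]
    have hrI : ∫ x in (-c)..c, r x = Real.pi * c ^ 2 / 2 := by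
      rw [show r = fun x => Real.sqrt (c ^ 2 - x ^ 2) from funext hr]; exact hIr
    rw [ha]
    rw [hrI] at hmono
    calc c ^ 2 / 2 = 1 / Real.pi * (Real.pi * c ^ 2 / 2) := by
          field_simp
      _ ≤ 1 / Real.pi * ∫ x in (-c)..c, v x :=
          mul_le_mul_of_nonneg_left hmono (by positivity)
  have hKlow : c ^ 2 / 2 ≤ c * v z₀ / 2 := by nlinarith
  have ha0 : 0 ≤ a := le_trans (by positivity) halow
  have hK0 : 0 ≤ c * v z₀ / 2 := le_trans (by positivity) hKlow
  -- final assembly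
  set K := c * v z₀ / 2 with hK
  have hsqa : Real.sqrt a ^ 2 = a := Real.sq_sqrt ha0
  have hsqK : Real.sqrt K ^ 2 = K := Real.sq_sqrt hK0
  have hs2 : Real.sqrt 2 > 0 := Real.sqrt_pos.mpr (by norm_num)
  have hs2sq : Real.sqrt 2 ^ 2 = 2 := Real.sq_sqrt (by norm_num)
  have hdenlow : c * Real.sqrt 2 ≤ Real.sqrt a + Real.sqrt K := by
    have h1 : Real.sqrt (c ^ 2 / 2) ≤ Real.sqrt a := Real.sqrt_le_sqrt halow
    have h2 : Real.sqrt (c ^ 2 / 2) ≤ Real.sqrt K := Real.sqrt_le_sqrt hKlow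
    have hA : c * Real.sqrt 2 = Real.sqrt (2 * c ^ 2) := by
      rw [Real.sqrt_mul (by norm_num : (0:ℝ) ≤ 2) (c ^ 2), Real.sqrt_sq hc.le, mul_comm]
    have hB : Real.sqrt (2 * c ^ 2) = 2 * Real.sqrt (c ^ 2 / 2) := by
      rw [show (2:ℝ) * c ^ 2 = 2 ^ 2 * (c ^ 2 / 2) by ring,
        Real.sqrt_mul (by norm_num : (0:ℝ) ≤ 2 ^ 2) (c ^ 2 / 2),
        Real.sqrt_sq (by norm_num : (0:ℝ) ≤ 2)]
    rw [hA, hB]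
    linarith
  have hprod : |Real.sqrt a - Real.sqrt K| * (Real.sqrt a + Real.sqrt K) = |a - K| := by
    have hnn : (0:ℝ) ≤ Real.sqrt a + Real.sqrt K := by positivity
    rw [← abs_of_nonneg hnn, ← abs_mul]
    congr 1
    linear_combination hsqa - hsqK
  have hfin : |Real.sqrt a - Real.sqrt K| * (c * Real.sqrt 2)
      ≤ c ^ 4 / 8 * (M'' + 6 * M' ^ 2) := by
    calc |Real.sqrt a - Real.sqrt K| * (c * Real.sqrt 2)
        ≤ |Real.sqrt a - Real.sqrt K| * (Real.sqrt a + Real.sqrt K) :=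
          mul_le_mul_of_nonneg_left hdenlow (abs_nonneg _)
      _ = |a - K| := hprod
      _ ≤ M'' * c ^ 4 / (4 * Real.pi) + c ^ 4 * M' ^ 2 / 2 := key3
      _ ≤ c ^ 4 / 8 * (M'' + 6 * M' ^ 2) := by
          have hp : M'' * c ^ 4 / (4 * Real.pi) ≤ M'' * c ^ 4 / 8 := by
            rw [div_eq_mul_inv, div_eq_mul_inv]
            refine mul_le_mul_of_nonneg_left ?_ (mul_nonneg hM''0 (pow_nonneg hc.le 4))
            exact inv_anti₀ (by norm_num) (by linarith [Real.pi_gt_three])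
          linarith [hp, mul_nonneg (pow_nonneg hc.le 4) (sq_nonneg M')]
  have hposden : (0:ℝ) < c * Real.sqrt 2 := by positivity
  have hfinal := (le_div_iff₀ hposden).mpr hfin
  calc |Real.sqrt a - Real.sqrt K|
      ≤ (c ^ 4 / 8 * (M'' + 6 * M' ^ 2)) / (c * Real.sqrt 2) := hfinal
    _ = c ^ 3 / (8 * Real.sqrt 2) * (M'' + 6 * M' ^ 2) := by
        field_simp
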